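/- arXiv:2509.02341 — 4 statements merged into one kernel-verified Lean document; each statement's English description precedes it below -/
import Mathlib

section
/- Let y ∈ ℝ with y ≠ 0, and let Φ be the standard normal CDF. Define CRPS(σ) = ∫_{-∞}^{∞} (Φ(x/σ) - 𝟙{x ≥ y})² dx for σ > 0. Then the unique minimizer of CRPS over σ > 0 is σ* = |y| / √(ln 2). -/
open MeasureTheory Set Real
open Filter Topology

/-- Standard normal CDF. -/
noncomputable def stdNormalCDF (x : ℝ) : ℝ :=
  ∫ t in Set.Iic x, Real.exp (-t ^ 2 / 2) / Real.sqrt (2 * Real.pi)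

/-- CRPS of the zero-mean Gaussian forecast `N(0, σ²)` against observation `y`. -/
noncomputable def gaussCRPS (σ y : ℝ) : ℝ :=
  ∫ x : ℝ, (stdNormalCDF (x / σ) - (if y ≤ x then (1 : ℝ) else 0)) ^ 2

/-! ### Auxiliary: the standard normal pdf -/

noncomputable def npdf (t : ℝ) : ℝ := Real.exp (-t ^ 2 / 2) / Real.sqrt (2 * Real.pi)

lemma sqrt2pi_pos : 0 < Real.sqrt (2 * Real.pi) := Real.sqrt_pos.2 (by positivity)

lemma npdf_pos (t : ℝ) : 0 < npdf t := div_pos (Real.exp_pos _) sqrt2pi_pos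

lemma npdf_neg (t : ℝ) : npdf (-t) = npdf t := by simp [npdf]

lemma continuous_npdf : Continuous npdf := by unfold npdf; fun_prop

lemma integrable_npdf : Integrable npdf := by
  have h : Integrable (fun t : ℝ => Real.exp (-(1/2 : ℝ) * t ^ 2)) :=
    integrable_exp_neg_mul_sq (by norm_num)
  refine (h.div_const (Real.sqrt (2 * Real.pi))).congr
    (Filter.Eventually.of_forall fun t => ?_)
  unfold npdf
  ring_nf

lemma integral_npdf : ∫ t, npdf t = 1 := by
  have h : ∫ t : ℝ, Real.exp (-(1/2 : ℝ) * t ^ 2) = Real.sqrt (π / (1/2)) :=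
    integral_gaussian _
  have e : ∀ t : ℝ, npdf t = Real.exp (-(1/2 : ℝ) * t ^ 2) / Real.sqrt (2 * π) := by
    intro t; unfold npdf; ring_nf
  simp_rw [e]
  rw [integral_div, h]
  rw [div_eq_one_iff_eq (ne_of_gt sqrt2pi_pos)]
  norm_num [mul_comm]

lemma stdNormalCDF_eq (x : ℝ) : stdNormalCDF x = ∫ t in Iic x, npdf t := rfl

lemma cdf_add_tail (x : ℝ) : stdNormalCDF x + ∫ t in Ioi x, npdf t = 1 := by
  rw [stdNormalCDF_eq, ← integral_npdf]
  have h := integral_add_compl (measurableSet_Iic (a := x)) integrable_npdf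
  rw [compl_Iic] at h
  exact h

lemma tail_eq (x : ℝ) : ∫ t in Ioi x, npdf t = 1 - stdNormalCDF x := by
  have := cdf_add_tail x; linarith

lemma stdNormalCDF_neg (x : ℝ) : stdNormalCDF (-x) = 1 - stdNormalCDF x := by
  have h1 : stdNormalCDF (-x) = ∫ t in Ioi x, npdf t := by
    rw [stdNormalCDF_eq]
    have h2 : (∫ t in Iic (-x), npdf t) = ∫ t in Iic (-x), npdf (-t) := by
      simp_rw [npdf_neg]
    rw [h2, integral_comp_neg_Iic, neg_neg]
  rw [h1, tail_eq]

lemma stdNormalCDF_nonneg (x : ℝ) : 0 ≤ stdNormalCDF x :=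
  setIntegral_nonneg measurableSet_Iic fun t _ => (npdf_pos t).le

lemma tail_nonneg (x : ℝ) : 0 ≤ ∫ t in Ioi x, npdf t :=
  setIntegral_nonneg measurableSet_Ioi fun t _ => (npdf_pos t).le

lemma stdNormalCDF_le_one (x : ℝ) : stdNormalCDF x ≤ 1 := by
  have := cdf_add_tail x; have := tail_nonneg x; linarith

lemma hasDerivAt_cdf (x : ℝ) : HasDerivAt stdNormalCDF (npdf x) x := by
  have key : ∀ u : ℝ, stdNormalCDF u = stdNormalCDF 0 + ∫ t in (0:ℝ)..u, npdf t := by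
    intro u
    rw [stdNormalCDF_eq, stdNormalCDF_eq 0]
    have h := intervalIntegral.integral_Iic_sub_Iic
      (integrable_npdf.integrableOn (s := Iic (0:ℝ)))
      (integrable_npdf.integrableOn (s := Iic u)) (μ := volume) (a := 0) (b := u)
    linarith
  have h2 : HasDerivAt (fun u => stdNormalCDF 0 + ∫ t in (0:ℝ)..u, npdf t) (npdf x) x := by
    refine HasDerivAt.const_add _ ?_
    exact intervalIntegral.integral_hasDerivAt_right
      (integrable_npdf.intervalIntegrable)
      (continuous_npdf.stronglyMeasurableAtFilter _ _)
      continuous_npdf.continuousAt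
  exact h2.congr_of_eventuallyEq (Filter.Eventually.of_forall key)

lemma hasDerivAt_npdf (t : ℝ) : HasDerivAt npdf (-t * npdf t) t := by
  have h1 : HasDerivAt (fun u : ℝ => -u ^ 2 / 2) (-t) t := by
    have := ((hasDerivAt_pow 2 t).neg.div_const 2)
    refine this.congr_deriv ?_
    simp; ring
  have h2 := h1.exp
  have h3 := h2.div_const (Real.sqrt (2 * π))
  refine h3.congr_deriv ?_
  unfold npdf; ring

lemma tendsto_npdf_top : Tendsto npdf atTop (𝓝 0) := by
  have h1 : Tendsto (fun t : ℝ => -t ^ 2 / 2) atTop atBot := by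
    have hp : Tendsto (fun t : ℝ => t ^ 2 / 2) atTop atTop :=
      (tendsto_pow_atTop two_ne_zero).atTop_div_const (by norm_num)
    have := tendsto_neg_atTop_atBot.comp hp
    refine this.congr fun t => ?_
    simp [Function.comp]; ring
  have h2 : Tendsto (fun t : ℝ => Real.exp (-t ^ 2 / 2)) atTop (𝓝 0) :=
    Real.tendsto_exp_atBot.comp h1
  have h3 := h2.div_const (Real.sqrt (2 * π))
  have : npdf = fun t : ℝ => Real.exp (-t ^ 2 / 2) / Real.sqrt (2 * π) := rfl
  rw [this]
  simpa using h3

lemma hasDerivAt_neg_npdf (t : ℝ) : HasDerivAt (fun u => -npdf u) (t * npdf t) t := by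
  have := (hasDerivAt_npdf t).neg
  refine this.congr_deriv ?_; ring

lemma tendsto_neg_npdf_top : Tendsto (fun u => -npdf u) atTop (𝓝 0) := by
  simpa using tendsto_npdf_top.neg

lemma integral_mul_npdf_Ioi {x : ℝ} (hx : 0 < x) :
    ∫ t in Ioi x, t * npdf t = npdf x := by
  have h := integral_Ioi_of_hasDerivAt_of_nonneg' (a := x)
    (fun t _ => hasDerivAt_neg_npdf t)
    (fun t ht => mul_nonneg (le_of_lt (lt_trans hx ht)) (npdf_pos t).le)
    tendsto_neg_npdf_top
  rw [h]; ring

lemma integrableOn_mul_npdf_Ioi {x : ℝ} (hx : 0 < x) :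
    IntegrableOn (fun t => t * npdf t) (Ioi x) :=
  integrableOn_Ioi_deriv_of_nonneg' (fun t _ => hasDerivAt_neg_npdf t)
    (fun t ht => mul_nonneg (le_of_lt (lt_trans hx ht)) (npdf_pos t).le)
    tendsto_neg_npdf_top

lemma tail_le {x : ℝ} (hx : 0 < x) : 1 - stdNormalCDF x ≤ npdf x / x := by
  rw [← tail_eq]
  have hmono : ∫ t in Ioi x, npdf t ≤ ∫ t in Ioi x, (t * npdf t) / x := by
    refine setIntegral_mono_on integrable_npdf.integrableOn
      ((integrableOn_mul_npdf_Ioi hx).div_const x) measurableSet_Ioi fun t ht => ?_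
    rw [mem_Ioi] at ht
    rw [le_div_iff₀ hx]
    nlinarith [npdf_pos t]
  calc ∫ t in Ioi x, npdf t ≤ ∫ t in Ioi x, (t * npdf t) / x := hmono
    _ = (∫ t in Ioi x, t * npdf t) / x := by rw [integral_div]
    _ = npdf x / x := by rw [integral_mul_npdf_Ioi hx]

lemma tendsto_cdf_atTop : Tendsto stdNormalCDF atTop (𝓝 1) := by
  have h0 : Tendsto (fun x : ℝ => 1 - npdf x) atTop (𝓝 1) := by
    simpa using tendsto_const_nhds.sub tendsto_npdf_top
  refine tendsto_of_tendsto_of_tendsto_of_le_of_le' h0 tendsto_const_nhds ?_ ?_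
  · filter_upwards [eventually_ge_atTop (1:ℝ)] with x hx
    have hxpos : (0:ℝ) < x := lt_of_lt_of_le one_pos hx
    have h1 := tail_le hxpos
    have h2 : npdf x / x ≤ npdf x := by
      rw [div_le_iff₀ hxpos]
      nlinarith [npdf_pos x]
    linarith
  · filter_upwards with x using stdNormalCDF_le_one x

lemma tendsto_cdf_atBot : Tendsto stdNormalCDF atBot (𝓝 0) := by
  have h1 : Tendsto (fun x : ℝ => stdNormalCDF (-x)) atBot (𝓝 1) :=
    tendsto_cdf_atTop.comp tendsto_neg_atBot_atTop
  have h2 : Tendsto (fun x : ℝ => 1 - stdNormalCDF (-x)) atBot (𝓝 0) := by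
    have := (tendsto_const_nhds (α := ℝ) (x := (1:ℝ)) (f := atBot)).sub h1
    simpa using this
  refine h2.congr fun x => ?_
  rw [stdNormalCDF_neg]; ring
lemma npdf_sq (u : ℝ) :
    2 * npdf u ^ 2 = Real.sqrt 2 * npdf (Real.sqrt 2 * u) / Real.sqrt π := by
  unfold npdf
  have hsπ : (0:ℝ) < Real.sqrt π := Real.sqrt_pos.2 Real.pi_pos
  have hs2 : (0:ℝ) < Real.sqrt 2 := Real.sqrt_pos.2 (by norm_num)
  have h2π : Real.sqrt (2 * π) = Real.sqrt 2 * Real.sqrt π :=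
    Real.sqrt_mul (by norm_num) π
  have hsq2 : Real.sqrt 2 ^ 2 = 2 := Real.sq_sqrt (by norm_num)
  have hexp : Real.exp (-(Real.sqrt 2 * u) ^ 2 / 2) = Real.exp (-u ^ 2) := by
    congr 1
    rw [mul_pow, hsq2]; ring
  have hexp2 : Real.exp (-u ^ 2 / 2) ^ 2 = Real.exp (-u ^ 2) := by
    rw [sq, ← Real.exp_add]; congr 1; ring
  rw [h2π, hexp]
  rw [div_pow, hexp2, mul_pow, hsq2]
  field_simp

/-- Antiderivative of `(Φ - 1)²`. -/
noncomputable def auxF (u : ℝ) : ℝ :=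
  u * (stdNormalCDF u - 1) ^ 2 + 2 * npdf u * (stdNormalCDF u - 1)
    - (stdNormalCDF (Real.sqrt 2 * u) - 1 / 2) / Real.sqrt π

lemma hasDerivAt_auxF (u : ℝ) : HasDerivAt auxF ((stdNormalCDF u - 1) ^ 2) u := by
  have hΦ := hasDerivAt_cdf u
  have h1 : HasDerivAt (fun v => v * (stdNormalCDF v - 1) ^ 2)
      ((stdNormalCDF u - 1) ^ 2 + u * (2 * (stdNormalCDF u - 1) ^ 1 * npdf u)) u := by
    have := (hasDerivAt_id u).mul ((hΦ.sub_const 1).pow 2)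
    refine this.congr_deriv ?_
    simp only [id_eq, Pi.pow_apply]
    push_cast
    ring
  have h2 : HasDerivAt (fun v => 2 * npdf v * (stdNormalCDF v - 1))
      (2 * (-u * npdf u) * (stdNormalCDF u - 1) + 2 * npdf u * npdf u) u :=
    ((hasDerivAt_npdf u).const_mul 2).mul (hΦ.sub_const 1)
  have h3 : HasDerivAt (fun v => (stdNormalCDF (Real.sqrt 2 * v) - 1 / 2) / Real.sqrt π)
      (npdf (Real.sqrt 2 * u) * Real.sqrt 2 / Real.sqrt π) u := by
    have hin : HasDerivAt (fun v : ℝ => Real.sqrt 2 * v) (Real.sqrt 2) u := by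
      simpa using (hasDerivAt_id u).const_mul (Real.sqrt 2)
    have := ((hasDerivAt_cdf (Real.sqrt 2 * u)).comp u hin).sub_const (1/2)
    exact this.div_const _
  have := (h1.add h2).sub h3
  refine this.congr_deriv ?_
  have key := npdf_sq u
  linear_combination key

lemma tendsto_mul_sq_top :
    Tendsto (fun u : ℝ => u * (stdNormalCDF u - 1) ^ 2) atTop (𝓝 0) := by
  refine tendsto_of_tendsto_of_tendsto_of_le_of_le' tendsto_const_nhds tendsto_npdf_top ?_ ?_
  · filter_upwards [eventually_ge_atTop (1:ℝ)] with x hx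
    positivity
  · filter_upwards [eventually_ge_atTop (1:ℝ)] with x hx
    have hxpos : (0:ℝ) < x := lt_of_lt_of_le one_pos hx
    have h1 := tail_le hxpos
    have h2 : 0 ≤ 1 - stdNormalCDF x := by linarith [stdNormalCDF_le_one x]
    have h3 : 1 - stdNormalCDF x ≤ 1 := by linarith [stdNormalCDF_nonneg x]
    have h4 : (stdNormalCDF x - 1) ^ 2 = (1 - stdNormalCDF x) ^ 2 := by ring
    rw [h4]
    have h5 : x * (1 - stdNormalCDF x) ≤ npdf x := by
      rw [le_div_iff₀ hxpos] at h1
      linarith [h1]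
    calc x * (1 - stdNormalCDF x) ^ 2
        = (x * (1 - stdNormalCDF x)) * (1 - stdNormalCDF x) := by ring
      _ ≤ npdf x * (1 - stdNormalCDF x) := mul_le_mul_of_nonneg_right h5 h2
      _ ≤ npdf x := mul_le_of_le_one_right (npdf_pos x).le h3
lemma tendsto_auxF : Tendsto auxF atTop (𝓝 (-(1 / (2 * Real.sqrt π)))) := by
  have t1 := tendsto_mul_sq_top
  have t2 : Tendsto (fun u : ℝ => 2 * npdf u * (stdNormalCDF u - 1)) atTop (𝓝 0) := by
    have ha : Tendsto (fun u : ℝ => 2 * npdf u) atTop (𝓝 (2 * 0)) :=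
      tendsto_npdf_top.const_mul 2
    have hb : Tendsto (fun u : ℝ => stdNormalCDF u - 1) atTop (𝓝 (1 - 1)) :=
      tendsto_cdf_atTop.sub_const 1
    have := ha.mul hb
    simpa using this
  have t3 : Tendsto (fun u : ℝ => (stdNormalCDF (Real.sqrt 2 * u) - 1 / 2) / Real.sqrt π)
      atTop (𝓝 ((1 - 1 / 2) / Real.sqrt π)) := by
    have hs2 : (0:ℝ) < Real.sqrt 2 := Real.sqrt_pos.2 (by norm_num)
    have hcomp : Tendsto (fun u : ℝ => Real.sqrt 2 * u) atTop atTop :=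
      Filter.tendsto_id.const_mul_atTop hs2
    exact ((tendsto_cdf_atTop.comp hcomp).sub_const (1/2)).div_const _
  have := (t1.add t2).sub t3
  simp only [add_zero, zero_add, zero_sub] at this
  convert this using 2
  · rfl
  ring
lemma integral_sq_Ioi (a : ℝ) :
    ∫ u in Ioi a, (stdNormalCDF u - 1) ^ 2 = -(1 / (2 * Real.sqrt π)) - auxF a :=
  integral_Ioi_of_hasDerivAt_of_nonneg' (fun x _ => hasDerivAt_auxF x)
    (fun x _ => sq_nonneg _) tendsto_auxF

lemma integrableOn_sq_Ioi (a : ℝ) :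
    IntegrableOn (fun u => (stdNormalCDF u - 1) ^ 2) (Ioi a) :=
  integrableOn_Ioi_deriv_of_nonneg' (fun x _ => hasDerivAt_auxF x)
    (fun x _ => sq_nonneg _) tendsto_auxF

lemma integrableOn_cdf_sq_Iio (t : ℝ) :
    IntegrableOn (fun u => stdNormalCDF u ^ 2) (Iio t) := by
  have h := integrableOn_sq_Ioi (-t)
  have h2 := (MeasurePreserving.integrableOn_comp_preimage
      (Measure.measurePreserving_neg (volume : Measure ℝ))
      (Homeomorph.neg ℝ).measurableEmbedding).2 h
  have hset : (fun x : ℝ => -x) ⁻¹' (Ioi (-t)) = Iio t := by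
    ext x; simp
  rw [hset] at h2
  refine h2.congr_fun (fun x _ => ?_) measurableSet_Iio
  show ((fun u => (stdNormalCDF u - 1) ^ 2) ∘ Neg.neg) x = stdNormalCDF x ^ 2
  simp only [Function.comp_apply]
  rw [stdNormalCDF_neg]; ring

lemma integral_cdf_sq_Iio (t : ℝ) :
    ∫ u in Iio t, stdNormalCDF u ^ 2 = ∫ u in Ioi (-t), (stdNormalCDF u - 1) ^ 2 := by
  rw [← integral_Iic_eq_integral_Iio]
  have h := integral_comp_neg_Iic t (fun u => (stdNormalCDF u - 1) ^ 2)
  rw [← h]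
  refine setIntegral_congr_fun measurableSet_Iic fun x _ => ?_
  show stdNormalCDF x ^ 2 = (stdNormalCDF (-x) - 1) ^ 2
  rw [stdNormalCDF_neg]; ring

lemma auxF_add_neg (t : ℝ) :
    auxF t + auxF (-t) = -(t * (2 * stdNormalCDF t - 1)) - 2 * npdf t := by
  unfold auxF
  rw [show Real.sqrt 2 * -t = -(Real.sqrt 2 * t) by ring]
  rw [stdNormalCDF_neg t, stdNormalCDF_neg (Real.sqrt 2 * t), npdf_neg]
  ring

lemma G_eq (t : ℝ) :
    (∫ u : ℝ, (stdNormalCDF u - if t ≤ u then (1:ℝ) else 0) ^ 2)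
      = t * (2 * stdNormalCDF t - 1) + 2 * npdf t - 1 / Real.sqrt π := by
  have hIci : IntegrableOn (fun u => (stdNormalCDF u - 1) ^ 2) (Ici t) :=
    (integrableOn_Ici_iff_integrableOn_Ioi (by simp)).2 (integrableOn_sq_Ioi t)
  have hsplit : (fun u : ℝ => (stdNormalCDF u - if t ≤ u then (1:ℝ) else 0) ^ 2)
      = fun u => (Iio t).indicator (fun v => stdNormalCDF v ^ 2) u
          + (Ici t).indicator (fun v => (stdNormalCDF v - 1) ^ 2) u := by
    funext u
    by_cases h : t ≤ u
    · have h1 : u ∉ Iio t := by simp [not_lt.2 h]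
      have h2 : u ∈ Ici t := h
      simp [indicator_of_notMem h1, indicator_of_mem h2, h]
    · have h1 : u ∈ Iio t := lt_of_not_ge h
      have h2 : u ∉ Ici t := by simp [h]
      simp [indicator_of_mem h1, indicator_of_notMem h2, h]
  rw [hsplit, integral_add
      (((integrableOn_cdf_sq_Iio t)).integrable_indicator measurableSet_Iio)
      (hIci.integrable_indicator measurableSet_Ici),
    integral_indicator measurableSet_Iio, integral_indicator measurableSet_Ici]
  rw [integral_cdf_sq_Iio, integral_Ici_eq_integral_Ioi,
    integral_sq_Ioi, integral_sq_Ioi]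
  have h := auxF_add_neg t
  have hsπ : (0:ℝ) < Real.sqrt π := Real.sqrt_pos.2 Real.pi_pos
  field_simp
  linear_combination (-2 * Real.sqrt π) * h
/-- Closed form of the CRPS integrand function. -/
noncomputable def auxG (t : ℝ) : ℝ :=
  t * (2 * stdNormalCDF t - 1) + 2 * npdf t - 1 / Real.sqrt π

/-- Closed form of the CRPS as a function of σ. -/
noncomputable def auxH (y σ : ℝ) : ℝ := σ * auxG (y / σ)

lemma gaussCRPS_eq {σ : ℝ} (hσ : 0 < σ) (y : ℝ) : gaussCRPS σ y = auxH y σ := by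
  have h1 : gaussCRPS σ y
      = ∫ x : ℝ, (fun u => (stdNormalCDF u - if y / σ ≤ u then (1:ℝ) else 0) ^ 2) (x / σ) := by
    unfold gaussCRPS
    congr 1
    funext x
    beta_reduce
    by_cases hyx : y ≤ x
    · rw [if_pos hyx, if_pos ((div_le_div_iff_of_pos_right hσ).2 hyx)]
    · rw [if_neg hyx, if_neg fun hc => hyx ((div_le_div_iff_of_pos_right hσ).1 hc)]
  rw [h1, MeasureTheory.Measure.integral_comp_div
    (fun u => (stdNormalCDF u - if y / σ ≤ u then (1:ℝ) else 0) ^ 2) σ]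
  rw [abs_of_pos hσ, smul_eq_mul, G_eq]
  rfl

lemma hasDerivAt_auxG (t : ℝ) : HasDerivAt auxG (2 * stdNormalCDF t - 1) t := by
  unfold auxG
  have h1 : HasDerivAt (fun v : ℝ => v * (2 * stdNormalCDF v - 1))
      (1 * (2 * stdNormalCDF t - 1) + t * (2 * npdf t)) t := by
    have := (hasDerivAt_id t).mul (((hasDerivAt_cdf t).const_mul 2).sub_const 1)
    exact this
  have h2 : HasDerivAt (fun v : ℝ => 2 * npdf v) (2 * (-t * npdf t)) t :=
    (hasDerivAt_npdf t).const_mul 2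
  have := (h1.add h2).sub_const (1 / Real.sqrt π)
  refine this.congr_deriv ?_
  ring

lemma hasDerivAt_auxH (y : ℝ) {σ : ℝ} (hσ : σ ≠ 0) :
    HasDerivAt (auxH y) (2 * npdf (y / σ) - 1 / Real.sqrt π) σ := by
  have hz : HasDerivAt (fun s : ℝ => y / s) (-(y / σ ^ 2)) σ := by
    simp only [div_eq_mul_inv]
    have := (hasDerivAt_inv hσ).const_mul y
    refine this.congr_deriv ?_
    ring
  have hcomp := (hasDerivAt_auxG (y / σ)).comp σ hz
  have h := (hasDerivAt_id σ).mul hcomp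
  have he : auxH y = fun s : ℝ => s * auxG (y / s) := rfl
  rw [he]
  refine h.congr_deriv ?_
  simp only [id_eq, Function.comp]
  unfold auxG
  field_simp
  ring
lemma two_npdf_lt_iff (z : ℝ) : 2 * npdf z < 1 / Real.sqrt π ↔ Real.log 2 < z ^ 2 := by
  have hsπ : (0:ℝ) < Real.sqrt π := Real.sqrt_pos.2 Real.pi_pos
  have h2π : Real.sqrt (2 * π) = Real.sqrt 2 * Real.sqrt π := Real.sqrt_mul (by norm_num) π
  have hrepr : 2 * npdf z = 2 * Real.exp (-z ^ 2 / 2) / (Real.sqrt 2 * Real.sqrt π) := by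
    unfold npdf; rw [h2π]; ring
  rw [hrepr, div_lt_div_iff₀ (by positivity) hsπ, one_mul, mul_lt_mul_iff_left₀ hsπ,
    Real.lt_sqrt (by positivity), mul_pow]
  have he : Real.exp (-z ^ 2 / 2) ^ 2 = Real.exp (-z ^ 2) := by
    rw [sq, ← Real.exp_add]; congr 1; ring
  rw [he]
  norm_num
  have hhalf : Real.exp (Real.log (1 / 2)) = 1 / 2 := Real.exp_log (by norm_num)
  have hlog : Real.log (1 / 2) = -Real.log 2 := by rw [one_div, Real.log_inv]
  constructor
  · intro h
    have h2 : Real.exp (-z ^ 2) < Real.exp (-Real.log 2) := by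
      rw [← hlog, hhalf]; linarith
    have := Real.exp_lt_exp.1 h2; linarith
  · intro h
    have h2 : Real.exp (-z ^ 2) < Real.exp (-Real.log 2) := Real.exp_lt_exp.2 (by linarith)
    rw [← hlog, hhalf] at h2; linarith

lemma two_npdf_gt_iff (z : ℝ) : 1 / Real.sqrt π < 2 * npdf z ↔ z ^ 2 < Real.log 2 := by
  have hsπ : (0:ℝ) < Real.sqrt π := Real.sqrt_pos.2 Real.pi_pos
  have h2π : Real.sqrt (2 * π) = Real.sqrt 2 * Real.sqrt π := Real.sqrt_mul (by norm_num) π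
  have hrepr : 2 * npdf z = 2 * Real.exp (-z ^ 2 / 2) / (Real.sqrt 2 * Real.sqrt π) := by
    unfold npdf; rw [h2π]; ring
  rw [hrepr, div_lt_div_iff₀ hsπ (by positivity), one_mul, mul_lt_mul_iff_left₀ hsπ,
    Real.sqrt_lt' (by positivity), mul_pow]
  have he : Real.exp (-z ^ 2 / 2) ^ 2 = Real.exp (-z ^ 2) := by
    rw [sq, ← Real.exp_add]; congr 1; ring
  rw [he]
  norm_num
  have hhalf : Real.exp (Real.log (1 / 2)) = 1 / 2 := Real.exp_log (by norm_num)
  have hlog : Real.log (1 / 2) = -Real.log 2 := by rw [one_div, Real.log_inv]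
  constructor
  · intro h
    have h2 : Real.exp (-Real.log 2) < Real.exp (-z ^ 2) := by
      rw [← hlog, hhalf]; linarith
    have := Real.exp_lt_exp.1 h2; linarith
  · intro h
    have h2 : Real.exp (-Real.log 2) < Real.exp (-z ^ 2) := Real.exp_lt_exp.2 (by linarith)
    rw [← hlog, hhalf] at h2; linarith

/-- The unique minimizer of the Gaussian CRPS over `σ > 0` is `|y| / √(ln 2)`. -/
theorem crps_unique_minimizer (y : ℝ) (hy : y ≠ 0) :
    ∀ σ : ℝ, 0 < σ → σ ≠ |y| / Real.sqrt (Real.log 2) →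
      gaussCRPS (|y| / Real.sqrt (Real.log 2)) y < gaussCRPS σ y := by
  intro σ hσ hne
  have hlog : 0 < Real.log 2 := Real.log_pos one_lt_two
  have hL : 0 < Real.sqrt (Real.log 2) := Real.sqrt_pos.2 hlog
  have hy' : 0 < |y| := abs_pos.2 hy
  set σs := |y| / Real.sqrt (Real.log 2) with hσs_def
  have hσs : 0 < σs := div_pos hy' hL
  rw [gaussCRPS_eq hσ y, gaussCRPS_eq hσs y]
  have hsqL : Real.sqrt (Real.log 2) ^ 2 = Real.log 2 := Real.sq_sqrt hlog.le
  -- key inequalities for the derivative sign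
  have key_lt : ∀ x : ℝ, 0 < x → x < σs → Real.log 2 < (y / x) ^ 2 := by
    intro x hx hxs
    have h1 : x * Real.sqrt (Real.log 2) < |y| := by
      rw [hσs_def] at hxs
      exact (lt_div_iff₀ hL).1 hxs
    have h2 : (x * Real.sqrt (Real.log 2)) ^ 2 < |y| ^ 2 := by
      apply pow_lt_pow_left₀ h1 (by positivity)
      norm_num
    rw [mul_pow, hsqL, sq_abs] at h2
    rw [div_pow, lt_div_iff₀ (by positivity)]
    nlinarith
  have key_gt : ∀ x : ℝ, σs < x → (y / x) ^ 2 < Real.log 2 := by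
    intro x hxs
    have hx : 0 < x := lt_trans hσs hxs
    have h1 : |y| < x * Real.sqrt (Real.log 2) := by
      rw [hσs_def] at hxs
      exact (div_lt_iff₀ hL).1 hxs
    have h2 : |y| ^ 2 < (x * Real.sqrt (Real.log 2)) ^ 2 := by
      apply pow_lt_pow_left₀ h1 (abs_nonneg y)
      norm_num
    rw [mul_pow, hsqL, sq_abs] at h2
    rw [div_pow, div_lt_iff₀ (by positivity)]
    nlinarith
  rcases lt_or_gt_of_ne hne with hlt | hgt
  · -- σ < σs : auxH y is strictly decreasing on (0, σs]
    have anti : StrictAntiOn (auxH y) (Ioc 0 σs) := by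
      apply strictAntiOn_of_deriv_neg (convex_Ioc _ _)
      · intro x hx
        exact (hasDerivAt_auxH y (ne_of_gt hx.1)).continuousAt.continuousWithinAt
      · intro x hx
        rw [interior_Ioc] at hx
        rw [(hasDerivAt_auxH y (ne_of_gt hx.1)).deriv]
        have := (two_npdf_lt_iff (y / x)).2 (key_lt x hx.1 hx.2)
        linarith
    exact anti ⟨hσ, hlt.le⟩ ⟨hσs, le_refl _⟩ hlt
  · -- σs < σ : auxH y is strictly increasing on [σs, ∞)
    have mono : StrictMonoOn (auxH y) (Ici σs) := by
      apply strictMonoOn_of_deriv_pos (convex_Ici _)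
      · intro x hx
        have hx0 : 0 < x := lt_of_lt_of_le hσs hx
        exact (hasDerivAt_auxH y (ne_of_gt hx0)).continuousAt.continuousWithinAt
      · intro x hx
        rw [interior_Ici] at hx
        have hx0 : 0 < x := lt_trans hσs hx
        rw [(hasDerivAt_auxH y (ne_of_gt hx0)).deriv]
        have := (two_npdf_gt_iff (y / x)).2 (key_gt x hx)
        linarith
    exact mono (Set.mem_Ici.2 le_rfl) hgt.le hgt
end

section
/- Let h(z) = z(2Φ(z) - 1) + 2φ(z) - 1/√π for z ∈ ℝ, where Φ and φ are the standard normal CDF and PDF. Then for fixed c > 0, the function σ ↦ σ·h(c/σ) on (0,∞) attains its minimum at the σ satisfying e^{-c²/(2σ²)} = 1/√2, i.e., σ = c/√(ln 2). -/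
open MeasureTheory Set Real

/-- Standard normal PDF. -/
noncomputable def stdNormalPDF (x : ℝ) : ℝ :=
  Real.exp (-x ^ 2 / 2) / Real.sqrt (2 * Real.pi)

/-- Normalized Gaussian CRPS. -/
noncomputable def normGaussCRPS (z : ℝ) : ℝ :=
  z * (2 * stdNormalCDF z - 1) + 2 * stdNormalPDF z - 1 / Real.sqrt Real.pi

lemma integrable_stdNormalPDF : Integrable stdNormalPDF := by
  have h : Integrable (fun x : ℝ => Real.exp (-(1/2 : ℝ) * x ^ 2)) :=
    integrable_exp_neg_mul_sq (by norm_num)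
  have h2 := h.div_const (Real.sqrt (2 * Real.pi))
  have : stdNormalPDF = fun x : ℝ => Real.exp (-(1/2 : ℝ) * x ^ 2) / Real.sqrt (2 * Real.pi) := by
    funext x; unfold stdNormalPDF; congr 1; ring_nf
  rw [this]; exact h2

lemma continuous_stdNormalPDF : Continuous stdNormalPDF := by
  unfold stdNormalPDF; continuity

lemma hasDerivAt_stdNormalCDF (x : ℝ) : HasDerivAt stdNormalCDF (stdNormalPDF x) x := by
  have key : stdNormalCDF = fun y => stdNormalCDF 0 + ∫ t in (0:ℝ)..y, stdNormalPDF t := by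
    funext y
    have h := intervalIntegral.integral_Iic_sub_Iic
      (integrable_stdNormalPDF.integrableOn (s := Set.Iic (0:ℝ)))
      (integrable_stdNormalPDF.integrableOn (s := Set.Iic y))
    have h1 : stdNormalCDF y = ∫ t in Set.Iic y, stdNormalPDF t := rfl
    have h0 : stdNormalCDF 0 = ∫ t in Set.Iic (0:ℝ), stdNormalPDF t := rfl
    rw [h1, h0]; linarith [h]
  have hd : HasDerivAt (fun y => ∫ t in (0:ℝ)..y, stdNormalPDF t) (stdNormalPDF x) x := by
    refine intervalIntegral.integral_hasDerivAt_right
      integrable_stdNormalPDF.intervalIntegrable ?_ continuous_stdNormalPDF.continuousAt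
    exact continuous_stdNormalPDF.stronglyMeasurable.stronglyMeasurableAtFilter
  rw [key]
  exact hd.const_add _

lemma hasDerivAt_stdNormalPDF (x : ℝ) :
    HasDerivAt stdNormalPDF (-x * stdNormalPDF x) x := by
  have h1 : HasDerivAt (fun t : ℝ => -t ^ 2 / 2) (-x) x := by
    have := ((hasDerivAt_pow 2 x).neg).div_const 2
    simpa using this.congr_deriv (by push_cast; ring)
  have h2 := (h1.exp).div_const (Real.sqrt (2 * Real.pi))
  have : stdNormalPDF = fun t : ℝ => Real.exp (-t ^ 2 / 2) / Real.sqrt (2 * Real.pi) := rfl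
  rw [this]
  refine h2.congr_deriv ?_
  beta_reduce; ring_nf

lemma hasDerivAt_normGaussCRPS (z : ℝ) :
    HasDerivAt normGaussCRPS (2 * stdNormalCDF z - 1) z := by
  have h1 : HasDerivAt (fun z => 2 * stdNormalCDF z - 1) (2 * stdNormalPDF z) z :=
    ((hasDerivAt_stdNormalCDF z).const_mul 2).sub_const 1
  have h2 := (hasDerivAt_id z).mul h1
  have h3 := (hasDerivAt_stdNormalPDF z).const_mul 2
  have h4 := ((h2.add h3).sub_const (1 / Real.sqrt Real.pi))
  have heq : normGaussCRPS =
      fun z => (id z * (2 * stdNormalCDF z - 1) + 2 * stdNormalPDF z) - 1 / Real.sqrt Real.pi := by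
    funext w; unfold normGaussCRPS; simp [id]
  rw [heq]
  refine h4.congr_deriv ?_
  simp only [id]; ring_nf

lemma hasDerivAt_G (c : ℝ) {σ : ℝ} (hσ : 0 < σ) :
    HasDerivAt (fun σ => σ * normGaussCRPS (c / σ))
      (2 * stdNormalPDF (c / σ) - 1 / Real.sqrt Real.pi) σ := by
  have hinv : HasDerivAt (fun σ : ℝ => c / σ) (c * -(σ ^ 2)⁻¹) σ := by
    have := (hasDerivAt_inv hσ.ne').const_mul c
    simpa [div_eq_mul_inv] using this
  have hcomp := (hasDerivAt_normGaussCRPS (c / σ)).comp σ hinv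
  have h := (hasDerivAt_id σ).mul hcomp
  refine h.congr_deriv ?_
  have hσ' : σ ≠ 0 := hσ.ne'
  simp only [Function.comp_apply, id]
  unfold normGaussCRPS
  field_simp
  ring

lemma exp_neg_log_two_half : Real.exp (-Real.log 2 / 2) = 1 / Real.sqrt 2 := by
  have hsq : Real.exp (-Real.log 2 / 2) ^ 2 = 2⁻¹ := by
    rw [← Real.exp_nat_mul, show ((2:ℕ):ℝ) * (-Real.log 2 / 2) = -Real.log 2 by push_cast; ring,
      Real.exp_neg, Real.exp_log two_pos]
  have hpos := Real.exp_pos (-Real.log 2 / 2)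
  rw [← Real.sqrt_sq hpos.le, hsq, Real.sqrt_inv, one_div]

lemma two_pdf_key : 2 * stdNormalPDF (Real.sqrt (Real.log 2)) = 1 / Real.sqrt Real.pi := by
  have hlog : 0 ≤ Real.log 2 := Real.log_nonneg one_le_two
  unfold stdNormalPDF
  rw [Real.sq_sqrt hlog, Real.sqrt_mul two_pos.le]
  rw [exp_neg_log_two_half]
  have h2 : (0:ℝ) < Real.sqrt 2 := Real.sqrt_pos.mpr two_pos
  have hpi : (0:ℝ) < Real.sqrt Real.pi := Real.sqrt_pos.mpr Real.pi_pos
  field_simp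
  rw [Real.sq_sqrt two_pos.le]

lemma pdf_anti {a b : ℝ} (ha : 0 ≤ a) (hab : a ≤ b) : stdNormalPDF b ≤ stdNormalPDF a := by
  unfold stdNormalPDF
  gcongr rexp ?_ / _
  nlinarith

/-- For fixed `c > 0`, `σ ↦ σ·h(c/σ)` attains its minimum over `σ > 0` at
`σ* = c/√(ln 2)`, which satisfies `e^{-c²/(2σ*²)} = 1/√2`. -/
theorem norm_crps_min (c : ℝ) (hc : 0 < c) :
    let σstar : ℝ := c / Real.sqrt (Real.log 2)
    (∀ σ : ℝ, 0 < σ → σstar * normGaussCRPS (c / σstar) ≤ σ * normGaussCRPS (c / σ)) ∧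
      Real.exp (-c ^ 2 / (2 * σstar ^ 2)) = 1 / Real.sqrt 2 := by
  intro σstar
  have hlog : 0 < Real.log 2 := Real.log_pos one_lt_two
  have hs : 0 < Real.sqrt (Real.log 2) := Real.sqrt_pos.mpr hlog
  have hσst : 0 < σstar := div_pos hc hs
  have hcσ : c / σstar = Real.sqrt (Real.log 2) := by
    show c / (c / Real.sqrt (Real.log 2)) = _
    rw [div_div_eq_mul_div, mul_comm, mul_div_assoc, div_self hc.ne', mul_one]
  constructor
  · intro σ hσ
    set G : ℝ → ℝ := fun σ => σ * normGaussCRPS (c / σ) with hGdef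
    show G σstar ≤ G σ
    rcases le_total σ σstar with h | h
    · have hanti : AntitoneOn G (Icc σ σstar) := by
        apply antitoneOn_of_deriv_nonpos (convex_Icc _ _)
        · intro x hx
          exact ((hasDerivAt_G c (lt_of_lt_of_le hσ hx.1)).continuousAt).continuousWithinAt
        · intro x hx
          rw [interior_Icc] at hx
          exact ((hasDerivAt_G c (hσ.trans hx.1)).differentiableAt).differentiableWithinAt
        · intro x hx
          rw [interior_Icc] at hx
          have hx0 : 0 < x := hσ.trans hx.1
          rw [(hasDerivAt_G c hx0).deriv]
          have hzb : Real.sqrt (Real.log 2) ≤ c / x := by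
            rw [← hcσ]
            exact div_le_div_of_nonneg_left hc.le hx0 hx.2.le
          have := pdf_anti hs.le hzb
          have hkey := two_pdf_key
          linarith
      exact hanti ⟨le_rfl, h⟩ ⟨h, le_rfl⟩ h
    · have hmono : MonotoneOn G (Icc σstar σ) := by
        apply monotoneOn_of_deriv_nonneg (convex_Icc _ _)
        · intro x hx
          exact ((hasDerivAt_G c (lt_of_lt_of_le hσst hx.1)).continuousAt).continuousWithinAt
        · intro x hx
          rw [interior_Icc] at hx
          exact ((hasDerivAt_G c (hσst.trans hx.1)).differentiableAt).differentiableWithinAt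
        · intro x hx
          rw [interior_Icc] at hx
          have hx0 : 0 < x := hσst.trans hx.1
          have hz0 : 0 < c / x := div_pos hc hx0
          rw [(hasDerivAt_G c hx0).deriv]
          have hzb : c / x ≤ Real.sqrt (Real.log 2) := by
            rw [← hcσ]
            exact div_le_div_of_nonneg_left hc.le hσst hx.1.le
          have := pdf_anti hz0.le hzb
          have hkey := two_pdf_key
          linarith
      exact hmono ⟨le_rfl, h⟩ ⟨h, le_rfl⟩ h
  · have hσsq : σstar ^ 2 = c ^ 2 / Real.log 2 := by
      show (c / Real.sqrt (Real.log 2)) ^ 2 = _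
      rw [div_pow, Real.sq_sqrt hlog.le]
    rw [hσsq]
    have : -c ^ 2 / (2 * (c ^ 2 / Real.log 2)) = -Real.log 2 / 2 := by
      field_simp
    rw [this, exp_neg_log_two_half]
end

section
/- The minimal CRPS value achieved by a Gaussian forecast N(0, σ²) against observation y with |y| = ε, at the optimal σ* = ε/√(ln 2), equals ε · [ √(ln 2)(2Φ(√(ln 2)) - 1) + 2φ(√(ln 2)) - 1/√π ] / √(ln 2), a quantity strictly less than ε. -/
open MeasureTheory Set Real Filter Topology

namespace CRPS


lemma pdf_pos (x : ℝ) : 0 < stdNormalPDF x :=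
  div_pos (Real.exp_pos _) (Real.sqrt_pos.2 (by positivity))

lemma pdf_even (x : ℝ) : stdNormalPDF (-x) = stdNormalPDF x := by
  simp [stdNormalPDF, neg_sq]

lemma continuous_pdf : Continuous stdNormalPDF := by
  unfold stdNormalPDF
  fun_prop

lemma pdf_eq (x : ℝ) : stdNormalPDF x = Real.exp (-(1/2 : ℝ) * x ^ 2) / Real.sqrt (2 * π) := by
  unfold stdNormalPDF; congr 1; ring_nf

lemma integrable_pdf : Integrable stdNormalPDF := by
  have h : Integrable fun x : ℝ => Real.exp (-(1/2 : ℝ) * x ^ 2) :=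
    integrable_exp_neg_mul_sq (by norm_num)
  have := h.div_const (Real.sqrt (2 * π))
  exact this.congr (by filter_upwards with x using (pdf_eq x).symm)

lemma integral_pdf : ∫ x, stdNormalPDF x = 1 := by
  simp_rw [pdf_eq, integral_div, integral_gaussian]
  rw [show π / (1/2 : ℝ) = 2 * π by ring, div_self (by positivity)]

lemma cdf_eq (x : ℝ) : stdNormalCDF x = ∫ t in Iic x, stdNormalPDF t := rfl

lemma cdf_nonneg (x : ℝ) : 0 ≤ stdNormalCDF x :=
  integral_nonneg fun t => (pdf_pos t).le

lemma cdf_le_one (x : ℝ) : stdNormalCDF x ≤ 1 := by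
  rw [cdf_eq, ← integral_pdf]
  exact setIntegral_le_integral integrable_pdf (ae_of_all _ fun t => (pdf_pos t).le)

lemma cdf_pos (x : ℝ) : 0 < stdNormalCDF x := by
  rw [cdf_eq]
  refine (setIntegral_pos_iff_support_of_nonneg_ae
    (ae_of_all _ fun t => (pdf_pos t).le) integrable_pdf.integrableOn).2 ?_
  have : Function.support stdNormalPDF = univ := by
    ext t; simp [Function.mem_support, (pdf_pos t).ne']
  rw [this, univ_inter, Real.volume_Iic]
  simp

lemma cdf_neg (x : ℝ) : stdNormalCDF (-x) = 1 - stdNormalCDF x := by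
  have hsplit := intervalIntegral.integral_Iic_add_Ioi (b := x) (f := stdNormalPDF) (μ := volume)
    integrable_pdf.integrableOn integrable_pdf.integrableOn
  have hcomp : ∫ t in Iic (-x), stdNormalPDF t = ∫ t in Ioi x, stdNormalPDF t := by
    have := integral_comp_neg_Iic (-x) stdNormalPDF
    simp_rw [pdf_even] at this
    rwa [neg_neg] at this
  rw [integral_pdf] at hsplit
  rw [cdf_eq, cdf_eq, hcomp]
  linarith

lemma cdf_lt_one (x : ℝ) : stdNormalCDF x < 1 := by
  have := cdf_pos (-x)
  rw [cdf_neg] at this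
  linarith

lemma hasDerivAt_cdf (x : ℝ) : HasDerivAt stdNormalCDF (stdNormalPDF x) x := by
  have h0 : stdNormalCDF = fun y => stdNormalCDF 0 + ∫ t in (0:ℝ)..y, stdNormalPDF t := by
    funext y
    have := intervalIntegral.integral_Iic_sub_Iic (a := (0:ℝ)) (b := y) (μ := volume)
      (f := stdNormalPDF) integrable_pdf.integrableOn integrable_pdf.integrableOn
    rw [cdf_eq, cdf_eq]
    linarith
  rw [h0]
  exact ((continuous_pdf.integral_hasStrictDerivAt 0 x).hasDerivAt).const_add _

lemma continuous_cdf : Continuous stdNormalCDF :=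
  continuous_iff_continuousAt.2 fun x => (hasDerivAt_cdf x).continuousAt

lemma cdf_le_exp {x : ℝ} (hx : x ≤ -2) : stdNormalCDF x ≤ Real.exp x / Real.sqrt (2 * π) := by
  rw [cdf_eq]
  have h1 : ∫ t in Iic x, Real.exp t / Real.sqrt (2 * π) = Real.exp x / Real.sqrt (2 * π) := by
    rw [integral_div, integral_exp_Iic]
  rw [← h1]
  refine setIntegral_mono_on integrable_pdf.integrableOn
    ((integrableOn_exp_Iic x).div_const _) measurableSet_Iic fun t ht => ?_
  have ht' : t ≤ -2 := le_trans ht hx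
  unfold stdNormalPDF
  gcongr
  nlinarith [Real.exp_le_exp.2 (show -t^2/2 ≤ t by nlinarith)]

lemma tendsto_cdf_atBot : Tendsto stdNormalCDF atBot (𝓝 0) := by
  have hh : Tendsto (fun x => Real.exp x / Real.sqrt (2 * π)) atBot (𝓝 0) := by
    simpa using Real.tendsto_exp_atBot.div_const (Real.sqrt (2 * π))
  refine tendsto_of_tendsto_of_tendsto_of_le_of_le' tendsto_const_nhds hh
    (.of_forall fun x => cdf_nonneg x) ?_
  filter_upwards [eventually_le_atBot (-2 : ℝ)] with x hx using cdf_le_exp hx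

noncomputable def F1 (u : ℝ) : ℝ :=
  u * stdNormalCDF u ^ 2 + 2 * stdNormalPDF u * stdNormalCDF u
    - stdNormalCDF (Real.sqrt 2 * u) / Real.sqrt π

lemma hasDerivAt_pdf (x : ℝ) : HasDerivAt stdNormalPDF (-x * stdNormalPDF x) x := by
  have h1 : HasDerivAt (fun x : ℝ => -x ^ 2 / 2) (-x) x := by
    have := ((hasDerivAt_pow 2 x).neg).div_const 2
    refine this.congr_deriv (Eq.symm ?_)
    simp; ring
  have h2 := (h1.exp).div_const (Real.sqrt (2 * π))
  refine h2.congr_deriv (Eq.symm ?_)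
  unfold stdNormalPDF; ring

lemma sqrt_two_pi_sq : Real.sqrt (2 * π) ^ 2 = 2 * π := Real.sq_sqrt (by positivity)

lemma key_pdf_sq (u : ℝ) :
    2 * stdNormalPDF u ^ 2 = Real.sqrt 2 * stdNormalPDF (Real.sqrt 2 * u) / Real.sqrt π := by
  unfold stdNormalPDF
  have h1 : (Real.sqrt 2 * u) ^ 2 = 2 * u ^ 2 := by
    rw [mul_pow, Real.sq_sqrt (by norm_num : (0:ℝ) ≤ 2)]
  rw [h1]
  have h2 : Real.exp (-u^2/2) ^ 2 = Real.exp (-(2 * u ^ 2) / 2) := by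
    rw [← Real.exp_nat_mul]  -- maybe wrong direction
    congr 1; ring
  have h3 : Real.sqrt (2*π) * Real.sqrt π = Real.sqrt 2 * π := by
    rw [← Real.sqrt_mul (by positivity), show 2 * π * π = 2 * π ^ 2 by ring,
      Real.sqrt_mul (by norm_num), Real.sqrt_sq Real.pi_nonneg]
  have h4 := sqrt_two_pi_sq
  have h5 : (0:ℝ) < Real.sqrt (2*π) := Real.sqrt_pos.2 (by positivity)
  have h6 : (0:ℝ) < Real.sqrt π := Real.sqrt_pos.2 Real.pi_pos
  have h7 : (0:ℝ) < Real.sqrt 2 := by positivity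
  have h8 : Real.sqrt π * Real.sqrt π = π := Real.mul_self_sqrt Real.pi_nonneg
  have h9 : Real.sqrt 2 * Real.sqrt 2 = 2 := Real.mul_self_sqrt (by norm_num)
  field_simp
  have h10 : Real.exp (-(u ^ 2 / 2)) ^ 2 = Real.exp (-u ^ 2) := by
    rw [← Real.exp_nat_mul]; congr 1; push_cast; ring
  rw [h10, Real.sqrt_mul (by norm_num : (0:ℝ) ≤ 2)]
  linear_combination (-(Real.sqrt π * Real.exp (-u ^ 2))) * h9

lemma hasDerivAt_F1 (u : ℝ) : HasDerivAt F1 (stdNormalCDF u ^ 2) u := by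
  have hΦ := hasDerivAt_cdf u
  have hφ := hasDerivAt_pdf u
  have hA : HasDerivAt (fun u : ℝ => u * stdNormalCDF u ^ 2)
      (1 * stdNormalCDF u ^ 2 + u * (2 * stdNormalCDF u ^ 1 * stdNormalPDF u)) u :=
    (hasDerivAt_id u).mul (hΦ.pow 2)
  have hB : HasDerivAt (fun u : ℝ => 2 * stdNormalPDF u * stdNormalCDF u)
      ((2 * (-u * stdNormalPDF u)) * stdNormalCDF u + 2 * stdNormalPDF u * stdNormalPDF u) u :=
    ((hφ.const_mul 2).mul hΦ)
  have hC : HasDerivAt (fun u : ℝ => stdNormalCDF (Real.sqrt 2 * u) / Real.sqrt π)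
      (stdNormalPDF (Real.sqrt 2 * u) * (Real.sqrt 2 * 1) / Real.sqrt π) u := by
    exact ((hasDerivAt_cdf (Real.sqrt 2 * u)).comp u
      ((hasDerivAt_id u).const_mul (Real.sqrt 2))).div_const _
  have := (hA.add hB).sub hC
  refine this.congr_deriv (Eq.symm ?_)
  linear_combination (-1 : ℝ) * key_pdf_sq u

lemma cdf_sq_le_exp {u : ℝ} (hu : u ≤ -2) :
    stdNormalCDF u ^ 2 ≤ Real.exp u / Real.sqrt (2 * π) := by
  have h1 := cdf_nonneg u
  have h2 := cdf_le_one u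
  have h3 := cdf_le_exp hu
  nlinarith

lemma integrableOn_cdf_sq (z : ℝ) :
    IntegrableOn (fun u => stdNormalCDF u ^ 2) (Iic z) := by
  have h1 : IntegrableOn (fun u => stdNormalCDF u ^ 2) (Iic (-2)) := by
    refine Integrable.mono ((integrableOn_exp_Iic (-2)).div_const (Real.sqrt (2 * π)))
      ((continuous_cdf.pow 2).aestronglyMeasurable) ?_
    rw [ae_restrict_iff' measurableSet_Iic]
    filter_upwards with u hu
    rw [Real.norm_eq_abs, Real.norm_eq_abs, abs_of_nonneg (by positivity),
      abs_of_nonneg (by positivity)]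
    exact cdf_sq_le_exp hu
  have h2 : IntegrableOn (fun u => stdNormalCDF u ^ 2) (Icc (-2) (max (-2) z)) :=
    (continuous_cdf.pow 2).integrableOn_Icc
  refine (h1.union h2).mono_set fun u hu => ?_
  rcases le_or_gt u (-2) with h | h
  · exact Or.inl h
  · exact Or.inr ⟨h.le, le_max_of_le_right hu⟩

lemma tendsto_pdf_atBot : Tendsto stdNormalPDF atBot (𝓝 0) := by
  have h : Tendsto (fun u : ℝ => -u ^ 2 / 2) atBot atBot := by
    apply tendsto_atBot_mono' _ _ tendsto_id
    filter_upwards [eventually_le_atBot (-2 : ℝ)] with u hu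
    show -u ^ 2 / 2 ≤ u
    nlinarith
  have := (Real.tendsto_exp_atBot.comp h).div_const (Real.sqrt (2 * π))
  unfold stdNormalPDF
  simpa only [Function.comp_def, zero_div] using this

lemma tendsto_F1_atBot : Tendsto F1 atBot (𝓝 0) := by
  have t1 : Tendsto (fun u : ℝ => u * stdNormalCDF u ^ 2) atBot (𝓝 0) := by
    have hg : Tendsto (fun u : ℝ => -u * (Real.exp u / Real.sqrt (2 * π))) atBot (𝓝 0) := by
      have h : Tendsto (fun u : ℝ => -u * Real.exp u) atBot (𝓝 0) := by
        have := (Real.tendsto_pow_mul_exp_neg_atTop_nhds_zero 1).comp tendsto_neg_atBot_atTop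
        simpa only [Function.comp_def, pow_one, neg_neg] using this
      have := h.div_const (Real.sqrt (2 * π))
      rw [zero_div] at this
      refine this.congr fun u => by ring
    refine squeeze_zero_norm' ?_ hg
    · filter_upwards [eventually_le_atBot (-2 : ℝ)] with u hu
      rw [Real.norm_eq_abs, abs_mul, abs_of_nonneg (by positivity : (0:ℝ) ≤ stdNormalCDF u ^ 2),
        abs_of_nonpos (by linarith : u ≤ 0)]
      have := cdf_sq_le_exp hu
      have hnu : (0:ℝ) ≤ -u := by linarith
      nlinarith
  have t2 : Tendsto (fun u : ℝ => 2 * stdNormalPDF u * stdNormalCDF u) atBot (𝓝 0) := by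
    have hg : Tendsto (fun u : ℝ => 2 * stdNormalPDF u) atBot (𝓝 0) := by
      simpa using (tendsto_pdf_atBot.const_mul 2)
    refine squeeze_zero_norm' ?_ hg
    · filter_upwards with u
      rw [Real.norm_eq_abs, abs_mul, abs_of_nonneg (mul_nonneg (by norm_num) (pdf_pos u).le)]
      have h1 := cdf_nonneg u
      have h2 := cdf_le_one u
      have h3 := (pdf_pos u).le
      rw [abs_of_nonneg h1]
      nlinarith
  have t3 : Tendsto (fun u : ℝ => stdNormalCDF (Real.sqrt 2 * u) / Real.sqrt π) atBot (𝓝 0) := by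
    have hmul : Tendsto (fun u : ℝ => Real.sqrt 2 * u) atBot atBot := by
      apply Tendsto.const_mul_atBot (by positivity : (0:ℝ) < Real.sqrt 2) tendsto_id
    simpa using (tendsto_cdf_atBot.comp hmul).div_const (Real.sqrt π)
  have := (t1.add t2).sub t3
  simp at this; exact this

lemma integral_Iic_cdf_sq (z : ℝ) : ∫ u in Iic z, stdNormalCDF u ^ 2 = F1 z := by
  have := integral_Iic_of_hasDerivAt_of_tendsto' (f := F1)
    (fun x _ => hasDerivAt_F1 x) (integrableOn_cdf_sq z) tendsto_F1_atBot
  simpa using this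

lemma cdf_sub_one_sq (u : ℝ) : (stdNormalCDF u - 1) ^ 2 = stdNormalCDF (-u) ^ 2 := by
  rw [cdf_neg]; ring

lemma integral_Ioi_cdf_sub_one_sq (z : ℝ) :
    ∫ u in Ioi z, (stdNormalCDF u - 1) ^ 2 = F1 (-z) := by
  have h := integral_comp_neg_Iic (-z) (fun u => (stdNormalCDF u - 1) ^ 2)
  rw [neg_neg] at h
  rw [← h, ← integral_Iic_cdf_sq (-z)]
  apply setIntegral_congr_fun measurableSet_Iic
  intro u _
  show (stdNormalCDF (-u) - 1) ^ 2 = stdNormalCDF u ^ 2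
  rw [cdf_sub_one_sq, neg_neg]

lemma integrableOn_cdf_sub_one_sq (z : ℝ) :
    IntegrableOn (fun u => (stdNormalCDF u - 1) ^ 2) (Ici z) := by
  have h1 : IntegrableOn (fun u => (stdNormalCDF u - 1) ^ 2) (Ici 2) := by
    refine Integrable.mono (g := fun u => Real.exp (-u) / Real.sqrt (2 * π)) ?_
      (((continuous_cdf.sub continuous_const).pow 2).aestronglyMeasurable) ?_
    · have : IntegrableOn (fun u : ℝ => Real.exp (-(1 : ℝ) * u)) (Ioi 2) :=
        exp_neg_integrableOn_Ioi 2 one_pos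
      have h2 : IntegrableOn (fun u : ℝ => Real.exp (-u) / Real.sqrt (2 * π)) (Ioi 2) := by
        simpa [neg_mul, IntegrableOn] using this.div_const (Real.sqrt (2 * π))
      exact (integrableOn_Ici_iff_integrableOn_Ioi (by simp)).2 h2
    · rw [ae_restrict_iff' measurableSet_Ici]
      filter_upwards with u hu
      rw [Real.norm_eq_abs, Real.norm_eq_abs, abs_of_nonneg (by positivity),
        abs_of_nonneg (by positivity : (0:ℝ) ≤ Real.exp (-u) / Real.sqrt (2*π))]
      rw [cdf_sub_one_sq]
      have hu2 : (2:ℝ) ≤ u := hu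
      exact cdf_sq_le_exp (by linarith : -u ≤ -2)
  have h2 : IntegrableOn (fun u => (stdNormalCDF u - 1) ^ 2) (Icc (min 2 z) 2) :=
    ((continuous_cdf.sub continuous_const).pow 2).integrableOn_Icc
  refine (h1.union h2).mono_set fun u hu => ?_
  rcases le_or_gt 2 u with h | h
  · exact Or.inl h
  · exact Or.inr ⟨min_le_of_right_le hu, h.le⟩

lemma integral_g (z : ℝ) :
    ∫ u : ℝ, (stdNormalCDF u - (if z ≤ u then (1:ℝ) else 0)) ^ 2 = F1 z + F1 (-z) := by
  set g : ℝ → ℝ := fun u => (stdNormalCDF u - (if z ≤ u then (1:ℝ) else 0)) ^ 2 with hg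
  have hIio : IntegrableOn g (Iio z) := by
    refine ((integrableOn_cdf_sq z).mono_set Iio_subset_Iic_self).congr_fun ?_ measurableSet_Iio
    intro u hu
    simp [g, if_neg (not_le.2 (mem_Iio.1 hu))]
  have hIci : IntegrableOn g (Ici z) := by
    refine (integrableOn_cdf_sub_one_sq z).congr_fun ?_ measurableSet_Ici
    intro u hu
    simp [g, if_pos (mem_Ici.1 hu)]
  have hsplit := intervalIntegral.integral_Iio_add_Ici (μ := volume) (b := z) hIio hIci
  have e1 : ∫ u in Iio z, g u = F1 z := by
    rw [show ∫ u in Iio z, g u = ∫ u in Iio z, stdNormalCDF u ^ 2 from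
      setIntegral_congr_fun measurableSet_Iio fun u hu => by
        simp [g, if_neg (not_le.2 (mem_Iio.1 hu))]]
    rw [← integral_Iic_eq_integral_Iio, integral_Iic_cdf_sq]
  have e2 : ∫ u in Ici z, g u = F1 (-z) := by
    rw [show ∫ u in Ici z, g u = ∫ u in Ici z, (stdNormalCDF u - 1) ^ 2 from
      setIntegral_congr_fun measurableSet_Ici fun u hu => by
        simp [g, if_pos (mem_Ici.1 hu)]]
    rw [integral_Ici_eq_integral_Ioi, integral_Ioi_cdf_sub_one_sq]
  rw [← hsplit, e1, e2]

lemma integral_eq {σ : ℝ} (hσ : 0 < σ) (z : ℝ) :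
    ∫ x : ℝ, (stdNormalCDF (x / σ) - (if σ * z ≤ x then (1:ℝ) else 0)) ^ 2
      = σ * (F1 z + F1 (-z)) := by
  have hfun : ∀ x : ℝ, (stdNormalCDF (x / σ) - (if σ * z ≤ x then (1:ℝ) else 0)) ^ 2
      = (fun u => (stdNormalCDF u - (if z ≤ u then (1:ℝ) else 0)) ^ 2) (x / σ) := by
    intro x
    have h : (σ * z ≤ x) = (z ≤ x / σ) := by
      rw [eq_iff_iff, le_div_iff₀ hσ, mul_comm]
    simp only [h]
  simp_rw [hfun]
  rw [MeasureTheory.Measure.integral_comp_div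
    (fun u => (stdNormalCDF u - (if z ≤ u then (1:ℝ) else 0)) ^ 2) σ,
    integral_g, smul_eq_mul, abs_of_pos hσ]

lemma F1_add (s : ℝ) : F1 s + F1 (-s)
    = s * (2 * stdNormalCDF s - 1) + 2 * stdNormalPDF s - 1 / Real.sqrt π := by
  unfold F1
  rw [cdf_neg s, pdf_even s, mul_neg, cdf_neg (Real.sqrt 2 * s)]
  ring

lemma two_pdf_sqrt_log_two : 2 * stdNormalPDF (Real.sqrt (Real.log 2)) = 1 / Real.sqrt π := by
  have hlog : (0:ℝ) < Real.log 2 := Real.log_pos one_lt_two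
  unfold stdNormalPDF
  rw [Real.sq_sqrt hlog.le, neg_div, Real.exp_neg, Real.exp_half, Real.exp_log two_pos]
  have h1 : Real.sqrt 2 * Real.sqrt (2 * π) = 2 * Real.sqrt π := by
    rw [← Real.sqrt_mul (by norm_num : (0:ℝ) ≤ 2), show (2:ℝ) * (2 * π) = 4 * π by ring,
      Real.sqrt_mul (by norm_num : (0:ℝ) ≤ 4),
      show Real.sqrt 4 = 2 by
        rw [show (4:ℝ) = 2 ^ 2 by norm_num, Real.sqrt_sq (by norm_num : (0:ℝ) ≤ 2)]]
  have h2 : (0:ℝ) < Real.sqrt 2 := by positivity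
  have h3 : (0:ℝ) < Real.sqrt (2 * π) := Real.sqrt_pos.2 (by positivity)
  have h4 : (0:ℝ) < Real.sqrt π := Real.sqrt_pos.2 Real.pi_pos
  have h5 : Real.sqrt 2 * Real.sqrt 2 = 2 := Real.mul_self_sqrt (by norm_num)
  field_simp
  nlinarith [h5, h4, h1]

end CRPS

open CRPS in
/-- The minimal Gaussian CRPS value at `σ* = ε/√(ln 2)`, with `ε = |y|`, equals
`ε·[√(ln 2)(2Φ(√(ln 2))-1) + 2φ(√(ln 2)) - 1/√π]/√(ln 2)`, which is strictly less than `ε`. -/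
theorem crps_min_value (y : ℝ) (hy : y ≠ 0) :
    let ε : ℝ := |y|
    let σstar : ℝ := ε / Real.sqrt (Real.log 2)
    (∫ x : ℝ, (stdNormalCDF (x / σstar) - (if y ≤ x then (1 : ℝ) else 0)) ^ 2) =
        ε * (Real.sqrt (Real.log 2) * (2 * stdNormalCDF (Real.sqrt (Real.log 2)) - 1) +
          2 * stdNormalPDF (Real.sqrt (Real.log 2)) - 1 / Real.sqrt Real.pi) /
          Real.sqrt (Real.log 2) ∧
      ε * (Real.sqrt (Real.log 2) * (2 * stdNormalCDF (Real.sqrt (Real.log 2)) - 1) +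
          2 * stdNormalPDF (Real.sqrt (Real.log 2)) - 1 / Real.sqrt Real.pi) /
          Real.sqrt (Real.log 2) < ε := by
  intro ε σstar
  have hlog : (0:ℝ) < Real.log 2 := Real.log_pos one_lt_two
  have hs : 0 < Real.sqrt (Real.log 2) := Real.sqrt_pos.2 hlog
  set s : ℝ := Real.sqrt (Real.log 2) with hs_def
  have hε : 0 < ε := abs_pos.2 hy
  have hσ : 0 < σstar := div_pos hε hs
  have hσs : σstar * s = ε := by
    simp only [σstar]
    field_simp
    rfl
  obtain ⟨z, hz, hy_eq⟩ : ∃ z : ℝ, (z = s ∨ z = -s) ∧ y = σstar * z := by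
    rcases lt_or_gt_of_ne hy with h | h
    · refine ⟨-s, Or.inr rfl, ?_⟩
      have : ε = -y := abs_of_neg h
      rw [mul_neg, hσs, this, neg_neg]
    · refine ⟨s, Or.inl rfl, ?_⟩
      have : ε = y := abs_of_pos h
      rw [hσs, this]
  have hmain : (∫ x : ℝ, (stdNormalCDF (x / σstar) - (if y ≤ x then (1 : ℝ) else 0)) ^ 2)
      = σstar * (F1 s + F1 (-s)) := by
    rw [hy_eq, integral_eq hσ z]
    rcases hz with rfl | rfl
    · rfl
    · rw [neg_neg, add_comm]
  have hval : σstar * (F1 s + F1 (-s))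
      = ε * (s * (2 * stdNormalCDF s - 1) + 2 * stdNormalPDF s - 1 / Real.sqrt π) / s := by
    rw [F1_add]
    simp only [σstar]
    ring
  constructor
  · rw [hmain, hval]
  · rw [two_pdf_sqrt_log_two]
    have hΦ := cdf_lt_one s
    rw [add_sub_cancel_right, mul_comm s, mul_div_assoc, mul_div_assoc, div_self hs.ne',
      mul_one]
    nlinarith
end

section
/- Let r̂ be a real random variable with continuous strictly increasing CDF F, and fix quantile levels 0 ≤ γᵢ < γ_{i+1} < 1. Define the coverage-optimization map with factor λ > 0: T(r̂) = F⁻¹((1-γᵢ)/2) - λ(F⁻¹((1-γᵢ)/2) - r̂) if r̂ ≤ F⁻¹((1-γᵢ)/2); T(r̂) = F⁻¹((1+γᵢ)/2) + λ(r̂ - F⁻¹((1+γᵢ)/2)) if r̂ ≥ F⁻¹((1+γᵢ)/2); and T(r̂) = r̂ otherwise. Then T is strictly increasing on ℝ, and for every γ ≤ γᵢ the central γ-quantile interval of T(r̂) equals that of r̂ (so coverage probabilities at all levels γ ≤ γᵢ are unchanged). -/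
open Set

/-- The coverage-optimization tail-expansion map `T` is strictly increasing and leaves all
central quantile intervals at levels `γ ≤ γᵢ` unchanged. -/
theorem coverage_optimization_map (F : ℝ → ℝ)
    (hF_cont : Continuous F) (hF_mono : StrictMono F)
    (hF_range : ∀ x, F x ∈ Set.Icc (0 : ℝ) 1)
    (γi : ℝ) (hγi : 0 ≤ γi) (hγi1 : γi < 1)
    (a b : ℝ) (ha : F a = (1 - γi) / 2) (hb : F b = (1 + γi) / 2)
    (lam : ℝ) (hlam : 0 < lam) :
    let T : ℝ → ℝ := fun r =>
      if r ≤ a then a - lam * (a - r)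
      else if b ≤ r then b + lam * (r - b)
      else r
    StrictMono T ∧
      ∀ γ : ℝ, 0 ≤ γ → γ ≤ γi →
        ∀ qa qb : ℝ, F qa = (1 - γ) / 2 → F qb = (1 + γ) / 2 →
          T qa = qa ∧ T qb = qb := by
  intro T
  have hab : a ≤ b := hF_mono.le_iff_le.mp (by rw [ha, hb]; linarith)
  constructor
  · intro x y hxy
    simp only [T]
    by_cases hx : x ≤ a
    · by_cases hy : y ≤ a
      · rw [if_pos hx, if_pos hy]; nlinarith
      · rw [if_pos hx, if_neg hy]
        push_neg at hy
        have h1 : a - lam * (a - x) ≤ a := by nlinarith [mul_nonneg hlam.le (sub_nonneg.mpr hx)]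
        by_cases hy2 : b ≤ y
        · rw [if_pos hy2]
          rcases lt_or_eq_of_le hab with h | h
          · nlinarith [mul_nonneg hlam.le (sub_nonneg.mpr hy2)]
          · subst h
            nlinarith [mul_pos hlam (sub_pos.mpr hy)]
        · rw [if_neg hy2]; linarith
    · push_neg at hx
      rw [if_neg (not_le.mpr (hx.trans hxy)), if_neg (not_le.mpr hx)]
      by_cases hx2 : b ≤ x
      · rw [if_pos hx2, if_pos (hx2.trans hxy.le)]
        nlinarith
      · push_neg at hx2
        rw [if_neg (not_le.mpr hx2)]
        by_cases hy2 : b ≤ y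
        · rw [if_pos hy2]
          nlinarith [mul_nonneg hlam.le (sub_nonneg.mpr hy2)]
        · rw [if_neg hy2]; exact hxy
  · intro γ hγ0 hγi' qa qb hqa hqb
    have h1 : a ≤ qa := hF_mono.le_iff_le.mp (by rw [ha, hqa]; linarith)
    have h2 : qa ≤ b := hF_mono.le_iff_le.mp (by rw [hqa, hb]; linarith)
    have h3 : a ≤ qb := hF_mono.le_iff_le.mp (by rw [ha, hqb]; linarith)
    have h4 : qb ≤ b := hF_mono.le_iff_le.mp (by rw [hqb, hb]; linarith)
    have key : ∀ q, a ≤ q → q ≤ b → T q = q := by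
      intro q hq1 hq2
      simp only [T]
      by_cases h : q ≤ a
      · have : q = a := le_antisymm h hq1
        subst this; rw [if_pos le_rfl]; ring
      · rw [if_neg h]
        by_cases h' : b ≤ q
        · have : q = b := le_antisymm hq2 h'
          subst this; rw [if_pos le_rfl]; ring
        · rw [if_neg h']
    exact ⟨key qa h1 h2, key qb h3 h4⟩
end
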